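/- Let γ₁, γ₂ ∈ ℝ with γ₂ > 0 and γ₁ ≥ 0, let K ≥ 0, and let p_A^{(k)}, v_A^{(k)} (0 ≤ k ≤ K) and u^{(k)} (0 ≤ k ≤ K) be the data observed by Alice, with u^{(k)} ≠ 0 for all k. Then for every candidate initial state (p̃_B⁽⁰⁾, ṽ_B⁽⁰⁾) ∈ ℝ² such that the quantity γ₁(p̃_B⁽⁰⁾ − p_A^{(0)}) + γ₂(ṽ_B⁽⁰⁾ − v_A^{(0)}) is nonzero and has the same sign as u^{(0)}, there exist a sequence of inputs w^{(k)} ∈ ℝ, a trajectory defined by p̃_B^{(k+1)} = p̃_B^{(k)} + ṽ_B^{(k)}, ṽ_B^{(k+1)} = ṽ_B^{(k)} + w^{(k)}, and positive weights ã^{(k)} > 0 (0 ≤ k ≤ K) such that u^{(k)} = γ₁·ã^{(k)}(p̃_B^{(k)} − p_A^{(k)}) + γ₂·ã^{(k)}(ṽ_B^{(k)} − v_A^{(k)}) for all 0 ≤ k ≤ K. Hence the observed data are consistent with infinitely many distinct initial states of Bob, and Bob's initial states cannot be determined by Alice when the coupling weights are unknown and Bob has other (unobserved) neighbors. -/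

import Mathlib

noncomputable def stmt15traj (γ₁ γ₂ : ℝ) (pA vA u : ℕ → ℝ) (pB0 vB0 : ℝ) : ℕ → ℝ × ℝ
  | 0 => (pB0, vB0)
  | k + 1 =>
    let s := stmt15traj γ₁ γ₂ pA vA u pB0 vB0 k
    (s.1 + s.2, vA (k + 1) + (u (k + 1) - γ₁ * (s.1 + s.2 - pA (k + 1))) / γ₂)

lemma stmt15key (γ₁ γ₂ : ℝ) (hγ₂ : 0 < γ₂) (K : ℕ)
    (pA vA u : ℕ → ℝ) (hu : ∀ k ≤ K, u k ≠ 0) (pB0 vB0 : ℝ)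
    (h0 : (γ₁ * (pB0 - pA 0) + γ₂ * (vB0 - vA 0)) * u 0 > 0) :
    ∃ w pB vB a : ℕ → ℝ,
        pB 0 = pB0 ∧ vB 0 = vB0 ∧
        (∀ k, pB (k + 1) = pB k + vB k) ∧
        (∀ k, vB (k + 1) = vB k + w k) ∧
        (∀ k ≤ K, 0 < a k) ∧
        (∀ k ≤ K, u k = γ₁ * a k * (pB k - pA k) + γ₂ * a k * (vB k - vA k)) := by
  set r0 : ℝ := γ₁ * (pB0 - pA 0) + γ₂ * (vB0 - vA 0) with hr0
  have hr0ne : r0 ≠ 0 := by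
    intro h
    rw [h, zero_mul] at h0
    exact lt_irrefl 0 h0
  set pB : ℕ → ℝ := fun k => (stmt15traj γ₁ γ₂ pA vA u pB0 vB0 k).1 with hpB
  set vB : ℕ → ℝ := fun k => (stmt15traj γ₁ γ₂ pA vA u pB0 vB0 k).2 with hvB
  set a : ℕ → ℝ := fun k => if k = 0 then u 0 / r0 else 1 with ha
  refine ⟨fun k => vB (k + 1) - vB k, pB, vB, a, rfl, rfl, ?_, ?_, ?_, ?_⟩
  · intro k; rfl
  · intro k; ring
  · intro k hk
    rcases Nat.eq_zero_or_pos k with rfl | hkpos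
    · simp only [ha, if_pos rfl]
      rcases mul_pos_iff.mp h0 with ⟨h1, h2⟩ | ⟨h1, h2⟩
      · exact div_pos h2 h1
      · exact div_pos_of_neg_of_neg h2 h1
    · simp [ha, Nat.pos_iff_ne_zero.mp hkpos]
  · intro k hk
    rcases Nat.eq_zero_or_pos k with rfl | hkpos
    · have e1 : pB 0 = pB0 := rfl
      have e2 : vB 0 = vB0 := rfl
      simp only [ha, if_pos rfl, e1, e2]
      have : γ₁ * (u 0 / r0) * (pB0 - pA 0) + γ₂ * (u 0 / r0) * (vB0 - vA 0)
          = u 0 / r0 * r0 := by rw [hr0]; ring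
      rw [this, div_mul_cancel₀ _ hr0ne]
    · obtain ⟨j, rfl⟩ := Nat.exists_eq_add_of_lt hkpos
      simp only [zero_add] at *
      have hv : vB (j + 1) =
          vA (j + 1) + (u (j + 1) - γ₁ * (pB j + vB j - pA (j + 1))) / γ₂ := rfl
      have hp : pB (j + 1) = pB j + vB j := rfl
      have hane : a (j + 1) = 1 := if_neg (Nat.succ_ne_zero j)
      rw [hane, hv, hp]
      field_simp
      ring

/-- with unknown positive coupling weights and Bob's control
input unobserved, every candidate initial state whose first message residual
has the sign of u⁽⁰⁾ is consistent with all of Alice's observations; hence the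
set of consistent initial states of Bob is infinite and Bob's initial state
cannot be determined by Alice. -/
theorem stmt_15 (γ₁ γ₂ : ℝ) (hγ₂ : 0 < γ₂) (hγ₁ : 0 ≤ γ₁) (K : ℕ)
    (pA vA u : ℕ → ℝ) (hu : ∀ k ≤ K, u k ≠ 0) :
    (∀ pB0 vB0 : ℝ,
      (γ₁ * (pB0 - pA 0) + γ₂ * (vB0 - vA 0)) * u 0 > 0 →
      ∃ w pB vB a : ℕ → ℝ,
        pB 0 = pB0 ∧ vB 0 = vB0 ∧
        (∀ k, pB (k + 1) = pB k + vB k) ∧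
        (∀ k, vB (k + 1) = vB k + w k) ∧
        (∀ k ≤ K, 0 < a k) ∧
        (∀ k ≤ K, u k = γ₁ * a k * (pB k - pA k) + γ₂ * a k * (vB k - vA k)))
    ∧ Set.Infinite {x : ℝ × ℝ |
        ∃ w pB vB a : ℕ → ℝ,
          pB 0 = x.1 ∧ vB 0 = x.2 ∧
          (∀ k, pB (k + 1) = pB k + vB k) ∧
          (∀ k, vB (k + 1) = vB k + w k) ∧
          (∀ k ≤ K, 0 < a k) ∧
          (∀ k ≤ K, u k = γ₁ * a k * (pB k - pA k) + γ₂ * a k * (vB k - vA k))} := by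
  have hu0 := hu 0 (Nat.zero_le K)
  constructor
  · intro pB0 vB0 h0
    exact stmt15key γ₁ γ₂ hγ₂ K pA vA u hu pB0 vB0 h0
  · apply Set.infinite_of_injective_forall_mem
      (f := fun t : ℝ => ((pA 0, vA 0 + Real.exp t * u 0 / γ₂) : ℝ × ℝ))
    · intro s t hst
      simp only [Prod.mk.injEq] at hst
      have := hst.2
      have h := hst.2
      field_simp at h
      exact Real.exp_injective (mul_right_cancel₀ hu0 (by linear_combination h))
    · intro t
      apply stmt15key γ₁ γ₂ hγ₂ K pA vA u hu
      have : γ₁ * (pA 0 - pA 0) + γ₂ * (vA 0 + Real.exp t * u 0 / γ₂ - vA 0)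
          = Real.exp t * u 0 := by field_simp; ring
      rw [this]
      have : Real.exp t * u 0 * u 0 = Real.exp t * (u 0 * u 0) := by ring
      rw [this]
      exact mul_pos (Real.exp_pos t) (mul_self_pos.mpr hu0)
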